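/- For m ≥ 5, let H = K_{m,m} \ E(C_{2m}) and W a resolving set of H. Then at most one gap of W (maximal run of consecutive non-W vertices along the cycle C_{2m}) contains four vertices. -/

import Mathlib

/-- `W` resolves `G`: every vertex is determined by its distance vector to `W`. -/
def Resolves {V : Type*} (G : SimpleGraph V) (W : Set V) : Prop :=
  ∀ u v : V, (∀ w ∈ W, G.dist u w = G.dist v w) → u = v

/-- Metric dimension: minimum cardinality of a (finite) resolving set. -/
noncomputable def metricDim {V : Type*} (G : SimpleGraph V) : ℕ :=
  sInf {k | ∃ W : Set V, W.Finite ∧ W.ncard = k ∧ Resolves G W}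
/-- `K_{m,m}` minus the Hamiltonian cycle `x₁ y₁ x₂ y₂ … x_m y_m x₁` (0-indexed:
cycle edges are `xᵢ yᵢ` and `yᵢ x_{i+1 mod m}`). -/
def cycGraph (m : ℕ) : SimpleGraph (Fin m ⊕ Fin m) where
  Adj u v := match u, v with
    | Sum.inl i, Sum.inr j => j ≠ i ∧ (i : ℕ) ≠ ((j : ℕ) + 1) % m
    | Sum.inr j, Sum.inl i => j ≠ i ∧ (i : ℕ) ≠ ((j : ℕ) + 1) % m
    | _, _ => False
  symm := ⟨by rintro (i|i) (j|j) h <;> exact h⟩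
  loopless := ⟨by rintro (i|i) h <;> exact h⟩

/-- Position `k` (taken mod `2m`) along the Hamiltonian cycle
`x₁ y₁ x₂ y₂ …`: even positions `2i ↦ xᵢ`, odd positions `2i+1 ↦ yᵢ`. -/
def cyc (m : ℕ) [NeZero m] (k : ℕ) : Fin m ⊕ Fin m :=
  if (k % (2 * m)) % 2 = 0 then
    Sum.inl ⟨k % (2 * m) / 2, by
      have hm : 0 < m := Nat.pos_of_ne_zero (NeZero.ne m)
      have h : k % (2 * m) < 2 * m := Nat.mod_lt _ (by omega)
      exact Nat.div_lt_of_lt_mul (by omega)⟩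
  else
    Sum.inr ⟨k % (2 * m) / 2, by
      have hm : 0 < m := Nat.pos_of_ne_zero (NeZero.ne m)
      have h : k % (2 * m) < 2 * m := Nat.mod_lt _ (by omega)
      exact Nat.div_lt_of_lt_mul (by omega)⟩

/-- `W` has a gap of exactly `L` vertices starting at cycle position `s`:
the positions `s` and `s+L+1` are in `W` and the `L` positions strictly between are not. -/
def IsGap (m : ℕ) [NeZero m] (W : Set (Fin m ⊕ Fin m)) (s L : ℕ) : Prop :=
  cyc m s ∈ W ∧ cyc m (s + L + 1) ∈ W ∧ ∀ t, 1 ≤ t → t ≤ L → cyc m (s + t) ∉ W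

/-! ### Auxiliary lemmas -/

lemma cyc_congr (m : ℕ) [NeZero m] {p q : ℕ} (h : p % (2*m) = q % (2*m)) :
    cyc m p = cyc m q := by
  unfold cyc; simp_rw [h]

lemma cyc_inj (m : ℕ) [NeZero m] {p q : ℕ} (h : cyc m p = cyc m q) :
    p % (2*m) = q % (2*m) := by
  have hm : 0 < m := Nat.pos_of_ne_zero (NeZero.ne m)
  have hP : p % (2*m) < 2*m := Nat.mod_lt _ (by omega)
  have hQ : q % (2*m) < 2*m := Nat.mod_lt _ (by omega)
  unfold cyc at h
  split_ifs at h with h1 h2 h2 <;>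
    simp only [Sum.inl.injEq, Sum.inr.injEq, Fin.mk.injEq] at h <;> omega

lemma cyc_surj (m : ℕ) [NeZero m] (w : Fin m ⊕ Fin m) : ∃ q, w = cyc m q := by
  have hm : 0 < m := Nat.pos_of_ne_zero (NeZero.ne m)
  rcases w with i | i
  · refine ⟨2 * i.val, ?_⟩
    have h1 : (2 * i.val) % (2*m) = 2 * i.val := Nat.mod_eq_of_lt (by omega)
    unfold cyc
    rw [if_pos (by omega)]
    exact congrArg Sum.inl (Fin.ext (by simp; omega))
  · refine ⟨2 * i.val + 1, ?_⟩
    have h1 : (2 * i.val + 1) % (2*m) = 2 * i.val + 1 := Nat.mod_eq_of_lt (by omega)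
    unfold cyc
    rw [if_neg (by omega)]
    exact congrArg Sum.inr (Fin.ext (by simp; omega))

lemma succ_mod (n a : ℕ) (hn : 2 ≤ n) :
    (a + 1) % n = if a % n + 1 = n then 0 else a % n + 1 := by
  have h : a % n < n := Nat.mod_lt _ (by omega)
  rw [Nat.add_mod, Nat.one_mod_eq_one.mpr (by omega)]
  split_ifs with h1
  · rw [h1, Nat.mod_self]
  · exact Nat.mod_eq_of_lt (by omega)

lemma cyc_adj (m : ℕ) [NeZero m] (hm : 5 ≤ m) {p q : ℕ}
    (h2 : p % 2 ≠ q % 2)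
    (h3 : (p + 1) % (2*m) ≠ q % (2*m))
    (h4 : (q + 1) % (2*m) ≠ p % (2*m)) :
    (cycGraph m).Adj (cyc m p) (cyc m q) := by
  have hP : p % (2*m) < 2*m := Nat.mod_lt _ (by omega)
  have hQ : q % (2*m) < 2*m := Nat.mod_lt _ (by omega)
  have hp2 : p % (2*m) % 2 = p % 2 := Nat.mod_mod_of_dvd p ⟨m, rfl⟩
  have hq2 : q % (2*m) % 2 = q % 2 := Nat.mod_mod_of_dvd q ⟨m, rfl⟩
  have e1 : (p + 1) % (2*m) = if p % (2*m) + 1 = 2*m then 0 else p % (2*m) + 1 :=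
    succ_mod (2*m) p (by omega)
  have e2 : (q + 1) % (2*m) = if q % (2*m) + 1 = 2*m then 0 else q % (2*m) + 1 :=
    succ_mod (2*m) q (by omega)
  have eP : (p % (2*m) / 2 + 1) % m =
      if p % (2*m) / 2 + 1 = m then 0 else p % (2*m) / 2 + 1 := by
    have h := succ_mod m (p % (2*m) / 2) (by omega)
    rwa [Nat.mod_eq_of_lt (show p % (2*m) / 2 < m by omega)] at h
  have eQ : (q % (2*m) / 2 + 1) % m =
      if q % (2*m) / 2 + 1 = m then 0 else q % (2*m) / 2 + 1 := by
    have h := succ_mod m (q % (2*m) / 2) (by omega)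
    rwa [Nat.mod_eq_of_lt (show q % (2*m) / 2 < m by omega)] at h
  unfold cyc
  split_ifs with hb1 hb2 hb2
  · omega
  · -- p even, q odd
    refine ⟨fun h => ?_, fun h => ?_⟩
    · rw [Fin.mk.injEq] at h
      split_ifs at e1 e2 <;> omega
    · have h' : p % (2*m) / 2 = (q % (2*m) / 2 + 1) % m := h
      rw [eQ] at h'
      split_ifs at e1 e2 h' <;> omega
  · -- p odd, q even
    refine ⟨fun h => ?_, fun h => ?_⟩
    · rw [Fin.mk.injEq] at h
      split_ifs at e1 e2 <;> omega
    · have h' : q % (2*m) / 2 = (p % (2*m) / 2 + 1) % m := h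
      rw [eP] at h'
      split_ifs at e1 e2 h' <;> omega
  · omega

lemma exists_avoid (m : ℕ) [NeZero m] (hm : 5 ≤ m) (a b c d : Fin m) :
    ∃ k : Fin m, k ≠ a ∧ k ≠ b ∧ k ≠ c ∧ k ≠ d := by
  by_contra h
  push_neg at h
  have hsub : (Finset.univ : Finset (Fin m)) ⊆ {a, b, c, d} := by
    intro k _
    have hk := h k
    simp only [Finset.mem_insert, Finset.mem_singleton]
    tauto
  have h1 := Finset.card_le_card hsub
  have h2 : ({a, b, c, d} : Finset (Fin m)).card ≤ 4 := by
    refine (Finset.card_insert_le _ _).trans (Nat.succ_le_succ ?_)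
    refine (Finset.card_insert_le _ _).trans (Nat.succ_le_succ ?_)
    refine (Finset.card_insert_le _ _).trans (Nat.succ_le_succ ?_)
    simp
  simp [Finset.card_univ] at h1
  omega

lemma dist_two_inl (m : ℕ) [NeZero m] (hm : 5 ≤ m) (i j : Fin m) (h : i ≠ j) :
    (cycGraph m).dist (Sum.inl i) (Sum.inl j) = 2 := by
  have h2m : 2 ≤ m := by omega
  obtain ⟨k, hk1, hk2, hk3, hk4⟩ := exists_avoid m hm i j (i - 1) (j - 1)
  have hadd : ∀ a : Fin m, (a : ℕ) = ((k : ℕ) + 1) % m → k = a - 1 := by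
    intro a ha
    have h1m : ((1 : Fin m) : ℕ) = 1 := by
      rw [Fin.val_one']; exact Nat.mod_eq_of_lt (by omega)
    have : a = k + 1 := by
      apply Fin.ext
      rw [ha, Fin.add_def, h1m]
    rw [this]; exact (add_sub_cancel_right k 1).symm
  have adj1 : (cycGraph m).Adj (Sum.inl i) (Sum.inr k) :=
    ⟨fun hh => hk1 hh, fun hh => hk3 (hadd i hh)⟩
  have adj2 : (cycGraph m).Adj (Sum.inl j) (Sum.inr k) :=
    ⟨fun hh => hk2 hh, fun hh => hk4 (hadd j hh)⟩
  have hle : (cycGraph m).dist (Sum.inl i) (Sum.inl j) ≤ 2 := by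
    simpa using SimpleGraph.dist_le
      (SimpleGraph.Walk.cons adj1 (SimpleGraph.Walk.cons adj2.symm SimpleGraph.Walk.nil))
  have hne0 : (cycGraph m).dist (Sum.inl i) (Sum.inl j) ≠ 0 := by
    intro h0
    have hr : (cycGraph m).Reachable (Sum.inl i) (Sum.inl j) :=
      ⟨SimpleGraph.Walk.cons adj1 (SimpleGraph.Walk.cons adj2.symm SimpleGraph.Walk.nil)⟩
    exact h (Sum.inl_injective ((SimpleGraph.Reachable.dist_eq_zero_iff hr).mp h0))
  have hne1 : (cycGraph m).dist (Sum.inl i) (Sum.inl j) ≠ 1 := by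
    intro h1
    exact (SimpleGraph.dist_eq_one_iff_adj.mp h1)
  omega

lemma dist_two_inr (m : ℕ) [NeZero m] (hm : 5 ≤ m) (i j : Fin m) (h : i ≠ j) :
    (cycGraph m).dist (Sum.inr i) (Sum.inr j) = 2 := by
  have h2m : 2 ≤ m := by omega
  obtain ⟨k, hk1, hk2, hk3, hk4⟩ := exists_avoid m hm i j (i + 1) (j + 1)
  have hadd : ∀ a : Fin m, (k : ℕ) = ((a : ℕ) + 1) % m → k = a + 1 := by
    intro a ha
    have h1m : ((1 : Fin m) : ℕ) = 1 := by
      rw [Fin.val_one']; exact Nat.mod_eq_of_lt (by omega)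
    apply Fin.ext
    rw [ha, Fin.add_def, h1m]
  have adj1 : (cycGraph m).Adj (Sum.inr i) (Sum.inl k) :=
    ⟨fun hh => hk1 hh.symm, fun hh => hk3 (hadd i hh)⟩
  have adj2 : (cycGraph m).Adj (Sum.inr j) (Sum.inl k) :=
    ⟨fun hh => hk2 hh.symm, fun hh => hk4 (hadd j hh)⟩
  have hle : (cycGraph m).dist (Sum.inr i) (Sum.inr j) ≤ 2 := by
    simpa using SimpleGraph.dist_le
      (SimpleGraph.Walk.cons adj1 (SimpleGraph.Walk.cons adj2.symm SimpleGraph.Walk.nil))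
  have hne0 : (cycGraph m).dist (Sum.inr i) (Sum.inr j) ≠ 0 := by
    intro h0
    have hr : (cycGraph m).Reachable (Sum.inr i) (Sum.inr j) :=
      ⟨SimpleGraph.Walk.cons adj1 (SimpleGraph.Walk.cons adj2.symm SimpleGraph.Walk.nil)⟩
    exact h (Sum.inr_injective ((SimpleGraph.Reachable.dist_eq_zero_iff hr).mp h0))
  have hne1 : (cycGraph m).dist (Sum.inr i) (Sum.inr j) ≠ 1 := by
    intro h1
    exact (SimpleGraph.dist_eq_one_iff_adj.mp h1)
  omega

lemma dist_two (m : ℕ) [NeZero m] (hm : 5 ≤ m) {p q : ℕ}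
    (hpar : p % 2 = q % 2) (hne : cyc m p ≠ cyc m q) :
    (cycGraph m).dist (cyc m p) (cyc m q) = 2 := by
  have hp2 : p % (2*m) % 2 = p % 2 := Nat.mod_mod_of_dvd p ⟨m, rfl⟩
  have hq2 : q % (2*m) % 2 = q % 2 := Nat.mod_mod_of_dvd q ⟨m, rfl⟩
  unfold cyc at hne ⊢
  split_ifs at hne ⊢ with hb1 hb2 hb2
  · exact dist_two_inl m hm _ _ (fun hh => hne (by rw [hh]))
  · exfalso; omega
  · exfalso; omega
  · exact dist_two_inr m hm _ _ (fun hh => hne (by rw [hh]))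

lemma key (m : ℕ) [NeZero m] (hm : 5 ≤ m) (W : Set (Fin m ⊕ Fin m))
    (hW : Resolves (cycGraph m) W) (s₁ s₂ c : ℕ) (hc2 : 2 ≤ c) (hc3 : c ≤ 3)
    (hpar : (s₁ + 2) % 2 = (s₂ + c) % 2)
    (h₁ : IsGap m W s₁ 4) (h₂ : IsGap m W s₂ 4) :
    cyc m (s₁ + 2) = cyc m (s₂ + c) := by
  obtain ⟨hs1, he1, hg1⟩ := h₁
  obtain ⟨hs2, he2, hg2⟩ := h₂
  apply hW
  intro w hw
  obtain ⟨q, rfl⟩ := cyc_surj m w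
  -- w is not at any gap position
  have hq1 : ∀ t, 1 ≤ t → t ≤ 4 → q % (2*m) ≠ (s₁ + t) % (2*m) := by
    intro t ht1 ht4 he
    exact hg1 t ht1 ht4 (cyc_congr m he ▸ hw)
  have hq2 : ∀ t, 1 ≤ t → t ≤ 4 → q % (2*m) ≠ (s₂ + t) % (2*m) := by
    intro t ht1 ht4 he
    exact hg2 t ht1 ht4 (cyc_congr m he ▸ hw)
  by_cases hqp : q % 2 = (s₁ + 2) % 2
  · -- same side: both distances are 2
    have hne1 : cyc m (s₁ + 2) ≠ cyc m q := by
      intro he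
      exact hg1 2 (by omega) (by omega) (he ▸ hw)
    have hne2 : cyc m (s₂ + c) ≠ cyc m q := by
      intro he
      exact hg2 c (by omega) (by omega) (he ▸ hw)
    have hpar2 : (s₂ + c) % 2 = q % 2 := by omega
    rw [dist_two m hm hqp.symm hne1, dist_two m hm hpar2 hne2]
  · -- opposite side: both distances are 1
    have a1 : (cycGraph m).Adj (cyc m (s₁ + 2)) (cyc m q) := by
      refine cyc_adj m hm ?_ ?_ ?_
      · omega
      · intro he
        have e : s₁ + 2 + 1 = s₁ + 3 := by omega
        rw [e] at he
        exact hq1 3 (by omega) (by omega) he.symm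
      · intro he
        have h' : (q + 1) % (2*m) = (s₁ + 1 + 1) % (2*m) := he
        have hmod : q % (2*m) = (s₁ + 1) % (2*m) :=
          Nat.ModEq.add_right_cancel' 1 h'
        exact hq1 1 (by omega) (by omega) hmod
    have a2 : (cycGraph m).Adj (cyc m (s₂ + c)) (cyc m q) := by
      refine cyc_adj m hm ?_ ?_ ?_
      · omega
      · intro he
        exact hq2 (c + 1) (by omega) (by omega) he.symm
      · intro he
        have h' : (q + 1) % (2*m) = (s₂ + (c - 1) + 1) % (2*m) := by
          rw [show s₂ + (c - 1) + 1 = s₂ + c from by omega]; exact he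
        have hmod : q % (2*m) = (s₂ + (c - 1)) % (2*m) :=
          Nat.ModEq.add_right_cancel' 1 h'
        exact hq2 (c - 1) (by omega) (by omega) hmod
    rw [SimpleGraph.dist_eq_one_iff_adj.mpr a1, SimpleGraph.dist_eq_one_iff_adj.mpr a2]

/-- for `m ≥ 5`, at most one gap of a resolving set of
`K_{m,m} \ E(C_{2m})` contains four vertices (any two gaps of four vertices
start at the same cycle position mod `2m`). -/
theorem stmt8 (m : ℕ) [NeZero m] (hm : 5 ≤ m) (W : Set (Fin m ⊕ Fin m))
    (hW : Resolves (cycGraph m) W) (s₁ s₂ : ℕ)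
    (h₁ : IsGap m W s₁ 4) (h₂ : IsGap m W s₂ 4) :
    s₁ % (2 * m) = s₂ % (2 * m) := by
  by_cases hpar : s₁ % 2 = s₂ % 2
  · have h := cyc_inj m (key m hm W hW s₁ s₂ 2 (by omega) (by omega) (by omega) h₁ h₂)
    exact Nat.ModEq.add_right_cancel' 2 h
  · exfalso
    have h := cyc_inj m (key m hm W hW s₁ s₂ 3 (by omega) (by omega) (by omega) h₁ h₂)
    have h' : s₁ % (2*m) = (s₂ + 1) % (2*m) := by
      have : (s₁ + 2) % (2*m) = ((s₂ + 1) + 2) % (2*m) := h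
      exact Nat.ModEq.add_right_cancel' 2 this
    apply h₂.2.2 1 le_rfl (by omega)
    rw [← cyc_congr m h']
    exact h₁.1
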